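/- Let (eₙ) and (fₙ) be orthonormal bases of a Hilbert space H, let (λₙ) and (ρₙ) be summable sequences of positive reals, let 1 ≤ s ≤ 2 with exponents q, r ≥ 1 satisfying 1/(2q) + 1/(2r) = 1/s, and let X be an operator in the Schatten s-class. Then the series Σₙ λₙ^{1/2 − 1/(2q)} ρₙ^{1/(2r)} ⟨Xf₁, eₙ⟩ (fₙ ⊗ e₁) converges in Schatten s-norm and its s-norm is at most (Σₙ λₙ)^{1/2 − 1/(2q)} (Σₙ ρₙ)^{1/(2r)} ‖Xf₁‖. -/

import Mathlib

open ContinuousLinearMap Filter Topology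
open scoped ENNReal NNReal ComplexConjugate

/-- The trace of a (positive) operator `T`, computed with respect to a Hilbert basis `e`. -/
noncomputable def posTrace {H : Type*} [NormedAddCommGroup H] [InnerProductSpace ℂ H]
    {ι : Type*} (e : HilbertBasis ι ℂ H) (T : H →L[ℂ] H) : ℝ≥0∞ :=
  ∑' i, ENNReal.ofReal (Complex.re (inner ℂ (T (e i)) (e i) : ℂ))

/-- The Schatten `s`-norm `‖X‖_s = (tr (X*X)^{s/2})^{1/s}`, valued in `ℝ≥0∞`. -/
noncomputable def schattenNorm {H : Type*} [NormedAddCommGroup H] [InnerProductSpace ℂ H]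
    [CompleteSpace H] {ι : Type*} (e : HilbertBasis ι ℂ H) (s : ℝ) (X : H →L[ℂ] H) :
    ℝ≥0∞ :=
  (posTrace e (cfc (fun t : ℝ => t ^ (s / 2)) (adjoint X ∘L X))) ^ ((1 : ℝ) / s)

/-- The rank-one operator `g ⊗ f : h ↦ ⟨h, g⟩ f`. -/
noncomputable def rankOne {H : Type*} [NormedAddCommGroup H] [InnerProductSpace ℂ H]
    (g f : H) : H →L[ℂ] H :=
  (innerSL ℂ g).smulRight f

section Aux
variable {H : Type*} [NormedAddCommGroup H] [InnerProductSpace ℂ H] [CompleteSpace H]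

lemma rankOne_apply (g v h : H) : rankOne g v h = (inner ℂ g h : ℂ) • v := rfl

lemma rankOne_add (g g' v : H) : rankOne (g + g') v = rankOne g v + rankOne g' v := by
  ext h; simp [rankOne_apply, inner_add_left, add_smul]

lemma rankOne_sub (g g' v : H) : rankOne (g - g') v = rankOne g v - rankOne g' v := by
  ext h; simp [rankOne_apply, inner_sub_left, sub_smul]

lemma rankOne_smul (c : ℂ) (g v : H) : rankOne (c • g) v = conj c • rankOne g v := by
  ext h; simp [rankOne_apply, inner_smul_left, smul_smul, mul_comm]

lemma adjoint_rankOne (g v : H) : adjoint (rankOne g v) = rankOne v g := by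
  rw [eq_comm, eq_adjoint_iff]
  intro x y
  simp [rankOne_apply, inner_smul_left, inner_smul_right, mul_comm]

lemma rankOne_comp (a b c d : H) :
    rankOne a b ∘L rankOne c d = (inner ℂ a d : ℂ) • rankOne c b := by
  ext h
  simp [rankOne_apply, inner_smul_right, smul_smul, mul_comm]

lemma isSelfAdjoint_rankOne_self (g : H) : IsSelfAdjoint (rankOne g g) := by
  rw [isSelfAdjoint_iff, star_eq_adjoint, adjoint_rankOne]

lemma spectrum_rankOne_self (g : H) [Nontrivial H] :
    spectrum ℝ (rankOne g g) ⊆ {0, ‖g‖ ^ 2} := by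
  intro x hx
  have hmul : rankOne g g * rankOne g g = (‖g‖ ^ 2 : ℝ) • rankOne g g := by
    have := rankOne_comp g g g g
    rw [inner_self_eq_norm_sq_to_K] at this
    rw [show (rankOne g g * rankOne g g) = rankOne g g ∘L rankOne g g from rfl, this]
    norm_cast
  have key : x ^ 2 - ‖g‖ ^ 2 * x ∈ spectrum ℝ
      ((Polynomial.aeval (rankOne g g)) (Polynomial.X ^ 2 - Polynomial.C (‖g‖ ^ 2) * Polynomial.X)) := by
    refine spectrum.subset_polynomial_aeval (rankOne g g)
      (Polynomial.X ^ 2 - Polynomial.C (‖g‖ ^ 2) * Polynomial.X) ⟨x, hx, by simp⟩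
  have haeval : (Polynomial.aeval (rankOne g g))
      (Polynomial.X ^ 2 - Polynomial.C (‖g‖ ^ 2) * Polynomial.X) = 0 := by
    simp [pow_two, hmul, Algebra.smul_def]
  rw [haeval, spectrum.zero_eq] at key
  have : x ^ 2 - ‖g‖ ^ 2 * x = 0 := key
  have : x * (x - ‖g‖ ^ 2) = 0 := by ring_nf; linarith [this]
  rcases mul_eq_zero.1 this with h | h
  · exact Or.inl h
  · exact Or.inr (by simp; linarith)

lemma cfc_rankOne_self (g : H) [Nontrivial H] {s : ℝ} (hs : 1 ≤ s) :
    cfc (fun t : ℝ => t ^ (s / 2)) (rankOne g g)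
      = (‖g‖ ^ (s - 2) : ℝ) • rankOne g g := by
  have hsa := isSelfAdjoint_rankOne_self g
  rw [← cfc_const_mul_id (‖g‖ ^ (s - 2) : ℝ) (rankOne g g) hsa]
  apply cfc_congr
  intro x hx
  have hs0 : s / 2 ≠ 0 := by positivity
  rcases spectrum_rankOne_self g hx with h | h
  · simp [h, Real.zero_rpow hs0]
  · rw [Set.mem_singleton_iff] at h
    subst h
    rcases eq_or_lt_of_le (norm_nonneg g) with hg | hg
    · rw [← hg]
      simp [Real.zero_rpow hs0]
    · show (‖g‖ ^ 2 : ℝ) ^ (s / 2) = ‖g‖ ^ (s - 2) * ‖g‖ ^ 2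
      rw [show (‖g‖ ^ 2 : ℝ) = ‖g‖ ^ (2 : ℝ) by
        rw [← Real.rpow_natCast ‖g‖ 2]; norm_num]
      rw [← Real.rpow_mul (norm_nonneg g), ← Real.rpow_add hg]
      congr 1 <;> ring

lemma parseval_summable {ι : Type*} (e : HilbertBasis ι ℂ H) (g : H) :
    Summable fun i => ‖(inner ℂ (e i) g : ℂ)‖ ^ 2 := by
  have h := (lp.memℓp (e.repr g)).summable (p := 2) (by norm_num)
  simp only [ENNReal.toReal_ofNat] at h
  convert h using 2 with i
  rw [e.repr_apply_apply, ← Real.rpow_natCast]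
  norm_num

lemma parseval_tsum {ι : Type*} (e : HilbertBasis ι ℂ H) (g : H) :
    ∑' i, ‖(inner ℂ (e i) g : ℂ)‖ ^ 2 = ‖g‖ ^ 2 := by
  have h := lp.norm_rpow_eq_tsum (p := 2) (by norm_num) (e.repr g)
  simp only [ENNReal.toReal_ofNat] at h
  rw [e.repr.norm_map g] at h
  rw [← Real.rpow_natCast ‖g‖ 2]
  push_cast
  rw [h]
  congr 1 with i
  rw [e.repr_apply_apply, ← Real.rpow_natCast]
  norm_num

lemma posTrace_smul_rankOne {ι : Type*} (e : HilbertBasis ι ℂ H) (c : ℝ) (hc : 0 ≤ c) (g : H) :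
    posTrace e (c • rankOne g g) = ENNReal.ofReal (c * ‖g‖ ^ 2) := by
  unfold posTrace
  have hterm : ∀ i, Complex.re (inner ℂ ((c • rankOne g g) (e i)) (e i) : ℂ)
      = c * ‖(inner ℂ (e i) g : ℂ)‖ ^ 2 := by
    intro i
    have h1 : (inner ℂ ((c • rankOne g g) (e i)) (e i) : ℂ)
        = (c : ℂ) * Complex.normSq (inner ℂ g (e i) : ℂ) := by
      rw [ContinuousLinearMap.smul_apply, rankOne_apply]
      have : (c : ℂ) • ((inner ℂ g (e i) : ℂ) • g) = ((c : ℂ) * (inner ℂ g (e i) : ℂ)) • g :=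
        smul_smul _ _ _
      rw [show c • ((inner ℂ g (e i) : ℂ) • g) = ((c : ℂ) * (inner ℂ g (e i) : ℂ)) • g by
        rw [← this]; norm_cast]
      rw [inner_smul_left]
      rw [map_mul, Complex.conj_ofReal, mul_assoc, ← Complex.normSq_eq_conj_mul_self]
    rw [h1]
    have : ‖(inner ℂ (e i) g : ℂ)‖ ^ 2 = Complex.normSq (inner ℂ g (e i) : ℂ) := by
      rw [norm_inner_symm, ← Complex.sq_norm]
    rw [this]
    simp
  simp_rw [hterm]
  rw [← ENNReal.ofReal_tsum_of_nonneg (fun i => by positivity)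
    ((parseval_summable e g).mul_left c)]
  rw [tsum_mul_left, parseval_tsum]

lemma schattenNorm_rankOne {ι : Type*} (e : HilbertBasis ι ℂ H) (i0 : ι) (g : H) {s : ℝ}
    (hs : 1 ≤ s) : schattenNorm e s (rankOne g (e i0)) = ENNReal.ofReal ‖g‖ := by
  have hs0 : s ≠ 0 := by linarith
  have hne : Nontrivial H := by
    refine nontrivial_of_ne (e i0) 0 fun h => ?_
    have := e.orthonormal.1 i0
    rw [h] at this; simp at this
  unfold schattenNorm
  have hAA : adjoint (rankOne g (e i0)) ∘L rankOne g (e i0) = rankOne g g := by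
    rw [adjoint_rankOne, rankOne_comp]
    rw [inner_self_eq_norm_sq_to_K, e.orthonormal.1 i0]
    norm_num
  rw [hAA, cfc_rankOne_self g hs, posTrace_smul_rankOne e _ (by positivity) g]
  rcases eq_or_lt_of_le (norm_nonneg g) with hg | hg
  · rw [← hg]
    rw [show ((0:ℝ) ^ (s - 2) * 0 ^ 2 : ℝ) = 0 by ring]
    simp only [ENNReal.ofReal_zero]
    rw [ENNReal.zero_rpow_of_pos (by positivity)]
  · have h1 : (‖g‖ ^ (s - 2) * ‖g‖ ^ 2 : ℝ) = ‖g‖ ^ s := by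
      rw [show (‖g‖ ^ 2 : ℝ) = ‖g‖ ^ (2 : ℝ) by
        rw [← Real.rpow_natCast ‖g‖ 2]; norm_num]
      rw [← Real.rpow_add hg]
      norm_num
    rw [h1, ← ENNReal.ofReal_rpow_of_nonneg (norm_nonneg g) (by linarith),
      ← ENNReal.rpow_mul, mul_one_div, div_self hs0, ENNReal.rpow_one]

end Aux

/-- For orthonormal bases `(eₙ)`, `(fₙ)`, summable positive `(λₙ)`, `(ρₙ)`,
`1 ≤ s ≤ 2`, `q, r ≥ 1` with `1/(2q) + 1/(2r) = 1/s`, and `X` in the Schatten `s`-class, the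
series `∑ₙ λₙ^{1/2−1/(2q)} ρₙ^{1/(2r)} ⟨Xf₁, eₙ⟩ (fₙ ⊗ e₁)` converges in Schatten `s`-norm
and its `s`-norm is at most `(∑ₙ λₙ)^{1/2−1/(2q)} (∑ₙ ρₙ)^{1/(2r)} ‖Xf₁‖`. -/
theorem extremal_rank_one_schatten {H : Type*} [NormedAddCommGroup H]
    [InnerProductSpace ℂ H] [CompleteSpace H] [TopologicalSpace.SeparableSpace H]
    (e f : HilbertBasis ℕ ℂ H) (l p : ℕ → ℝ) (hl : ∀ n, 0 < l n) (hp : ∀ n, 0 < p n)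
    (hlsum : Summable l) (hpsum : Summable p)
    (q r s : ℝ) (hq : 1 ≤ q) (hr : 1 ≤ r) (hs1 : 1 ≤ s) (hs2 : s ≤ 2)
    (hqr : 1 / (2 * q) + 1 / (2 * r) = 1 / s)
    (X : H →L[ℂ] H) (hX : schattenNorm e s X ≠ ⊤) :
    ∃ T : H →L[ℂ] H,
      Tendsto (fun N => schattenNorm e s
          (T - ∑ n ∈ Finset.range N,
            ((l n ^ (1 / 2 - 1 / (2 * q)) * p n ^ (1 / (2 * r)) : ℝ) *
              (inner ℂ (e n) (X (f 0)) : ℂ)) • rankOne (f n) (e 0)))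
        atTop (𝓝 0) ∧
      schattenNorm e s T ≤
        ENNReal.ofReal ((∑' n, l n) ^ (1 / 2 - 1 / (2 * q)) *
          (∑' n, p n) ^ (1 / (2 * r)) * ‖X (f 0)‖) := by
  classical
  have hα : (0:ℝ) ≤ 1 / 2 - 1 / (2 * q) := by
    have hq0 : (0:ℝ) < q := by linarith
    have h2 : 1 / (2 * q) ≤ 1 / 2 := by
      apply one_div_le_one_div_of_le <;> linarith
    linarith
  have hβ : (0:ℝ) ≤ 1 / (2 * r) := by positivity
  set α := 1 / 2 - 1 / (2 * q) with hαdef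
  set β := 1 / (2 * r) with hβdef
  have hl0 : (0:ℝ) ≤ ∑' n, l n := tsum_nonneg fun n => (hl n).le
  have hp0 : (0:ℝ) ≤ ∑' n, p n := tsum_nonneg fun n => (hp n).le
  set K := (∑' n, l n) ^ α * (∑' n, p n) ^ β with hKdef
  have hK0 : 0 ≤ K := mul_nonneg (Real.rpow_nonneg hl0 _) (Real.rpow_nonneg hp0 _)
  have hrn0 : ∀ n, (0:ℝ) ≤ l n ^ α * p n ^ β := by
    intro n
    have := (hl n).le; have := (hp n).le
    positivity
  have hrn : ∀ n, l n ^ α * p n ^ β ≤ K := by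
    intro n
    apply mul_le_mul
    · exact Real.rpow_le_rpow (hl n).le (hlsum.le_tsum n fun j _ => (hl j).le) hα
    · exact Real.rpow_le_rpow (hp n).le (hpsum.le_tsum n fun j _ => (hp j).le) hβ
    · exact Real.rpow_nonneg (hp n).le _
    · exact Real.rpow_nonneg hl0 _
  set a : ℕ → ℂ := fun n =>
    (starRingEnd ℂ) (((l n ^ α * p n ^ β : ℝ) : ℂ) * (inner ℂ (e n) (X (f 0)) : ℂ)) with hadef
  have hna : ∀ n, ‖a n‖ = (l n ^ α * p n ^ β) * ‖(inner ℂ (e n) (X (f 0)) : ℂ)‖ := by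
    intro n
    have hrfl : a n = (starRingEnd ℂ)
        (((l n ^ α * p n ^ β : ℝ) : ℂ) * (inner ℂ (e n) (X (f 0)) : ℂ)) := rfl
    rw [hrfl, RCLike.norm_conj, norm_mul, Complex.norm_real, Real.norm_eq_abs,
      abs_of_nonneg (hrn0 n)]
  have hbound : ∀ n, ‖a n‖ ^ 2 ≤ K ^ 2 * ‖(inner ℂ (e n) (X (f 0)) : ℂ)‖ ^ 2 := by
    intro n
    rw [hna, mul_pow]
    exact mul_le_mul_of_nonneg_right
      (pow_le_pow_left₀ (hrn0 n) (hrn n) 2) (sq_nonneg _)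
  have hsummable : Summable fun n => ‖a n‖ ^ 2 :=
    Summable.of_nonneg_of_le (fun n => sq_nonneg _) hbound
      ((parseval_summable e (X (f 0))).mul_left (K ^ 2))
  have hmem : Memℓp a 2 := by
    apply memℓp_gen
    simp only [ENNReal.toReal_ofNat]
    convert hsummable using 2 with n
    rw [← Real.rpow_natCast]
    norm_num
  set A : lp (fun _ : ℕ => ℂ) 2 := ⟨a, hmem⟩ with hAdef
  set g : H := f.repr.symm A with hgdef
  have hgsum : HasSum (fun n => a n • f n) g := by
    simpa using f.hasSum_repr_symm A
  have hnormg : ‖g‖ ^ 2 = ∑' n, ‖a n‖ ^ 2 := by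
    have h1 : ‖g‖ = ‖A‖ := f.repr.symm.norm_map A
    have h2 := lp.norm_rpow_eq_tsum (p := 2) (by norm_num) A
    simp only [ENNReal.toReal_ofNat] at h2
    have h3 : ∀ x : ℝ, x ^ (2 : ℝ) = x ^ 2 := fun x => by
      rw [← Real.rpow_natCast x 2]; norm_num
    rw [h1, ← h3 ‖A‖, h2]
    exact tsum_congr fun n => h3 ‖a n‖
  have hgle : ‖g‖ ≤ K * ‖X (f 0)‖ := by
    have hsq : ‖g‖ ^ 2 ≤ (K * ‖X (f 0)‖) ^ 2 := by
      rw [hnormg, mul_pow]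
      calc ∑' n, ‖a n‖ ^ 2
          ≤ ∑' n, K ^ 2 * ‖(inner ℂ (e n) (X (f 0)) : ℂ)‖ ^ 2 :=
            Summable.tsum_le_tsum hbound hsummable
              ((parseval_summable e (X (f 0))).mul_left (K ^ 2))
        _ = K ^ 2 * ∑' n, ‖(inner ℂ (e n) (X (f 0)) : ℂ)‖ ^ 2 := tsum_mul_left
        _ = K ^ 2 * ‖X (f 0)‖ ^ 2 := by rw [parseval_tsum]
    exact (pow_le_pow_iff_left₀ (norm_nonneg g) (by positivity) two_ne_zero).mp hsq
  have hpartial : ∀ N, (∑ n ∈ Finset.range N,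
      (((l n ^ α * p n ^ β : ℝ) : ℂ) * (inner ℂ (e n) (X (f 0)) : ℂ)) • rankOne (f n) (e 0))
      = rankOne (∑ n ∈ Finset.range N, a n • f n) (e 0) := by
    intro N
    induction N with
    | zero =>
      simp only [Finset.range_zero, Finset.sum_empty]
      ext h
      simp [rankOne_apply]
    | succ N ih =>
      rw [Finset.sum_range_succ, Finset.sum_range_succ, ih, rankOne_add, rankOne_smul]
      congr 2
      simp [hadef]
  refine ⟨rankOne g (e 0), ?_, ?_⟩
  · have heq : ∀ N, schattenNorm e s (rankOne g (e 0) - ∑ n ∈ Finset.range N,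
        (((l n ^ α * p n ^ β : ℝ) : ℂ) * (inner ℂ (e n) (X (f 0)) : ℂ)) • rankOne (f n) (e 0))
        = ENNReal.ofReal ‖g - ∑ n ∈ Finset.range N, a n • f n‖ := by
      intro N
      rw [hpartial, ← rankOne_sub, schattenNorm_rankOne e 0 _ hs1]
    simp only [heq]
    have h1 : Tendsto (fun N => ∑ n ∈ Finset.range N, a n • f n) atTop (𝓝 g) :=
      hgsum.tendsto_sum_nat
    have h2 : Tendsto (fun N => ‖g - ∑ n ∈ Finset.range N, a n • f n‖) atTop (𝓝 0) := by
      have h3 := (tendsto_const_nhds (x := g) (f := atTop)).sub h1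
      simpa using h3.norm
    have h4 := ENNReal.tendsto_ofReal h2
    simpa using h4
  · rw [schattenNorm_rankOne e 0 g hs1]
    exact ENNReal.ofReal_le_ofReal (by rw [← hKdef] at *; linarith [hgle])
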